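/- Let k be a field, m ≥ 0, and let φ be a k-algebra automorphism of k[x]/(x^{m+1}). Then there exists a k-algebra automorphism ψ of k[x]/(x^{m+2}) whose reduction modulo x^{m+1} equals φ. -/

import Mathlib

open Polynomial

private lemma mk_comp' {k : Type*} [Field k] (I : Ideal k[X]) (p g : k[X]) :
    Ideal.Quotient.mk I (g.comp p) = aeval (Ideal.Quotient.mk I p) g := by
  rw [Polynomial.comp, Polynomial.hom_eval₂]
  rfl

private lemma lift_aux {k : Type*} [Field k] (m : ℕ) (hm : 1 ≤ m)
    (φ : (k[X] ⧸ Ideal.span {(X : k[X]) ^ (m + 1)}) ≃ₐ[k]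
         (k[X] ⧸ Ideal.span {(X : k[X]) ^ (m + 1)}))
    (hle : Ideal.span {(X : k[X]) ^ (m + 2)} ≤ Ideal.span {(X : k[X]) ^ (m + 1)}) :
    ∃ ψ : (k[X] ⧸ Ideal.span {(X : k[X]) ^ (m + 2)}) ≃ₐ[k]
          (k[X] ⧸ Ideal.span {(X : k[X]) ^ (m + 2)}),
      ∀ g : k[X],
        Ideal.Quotient.factor hle (ψ (Ideal.Quotient.mk _ g)) =
          φ (Ideal.Quotient.mk _ g) := by
  classical
  obtain ⟨p₀, hp₀⟩ := Ideal.Quotient.mk_surjective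
    (I := Ideal.span {(X : k[X]) ^ (m + 1)}) (φ (Ideal.Quotient.mk _ X))
  -- X divides p₀
  have hXp : X ∣ p₀ := by
    have h1 : Ideal.Quotient.mk (Ideal.span {(X : k[X]) ^ (m + 1)}) (p₀ ^ (m + 1)) = 0 := by
      rw [map_pow, hp₀, ← map_pow]
      have h2 : (Ideal.Quotient.mk (Ideal.span {(X : k[X]) ^ (m + 1)}) X) ^ (m + 1) = 0 := by
        rw [← map_pow, Ideal.Quotient.eq_zero_iff_mem]
        exact Ideal.subset_span rfl
      rw [h2, map_zero]
    rw [Ideal.Quotient.eq_zero_iff_mem, Ideal.mem_span_singleton] at h1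
    exact prime_X.dvd_of_dvd_pow ((dvd_pow_self X (Nat.succ_ne_zero m)).trans h1)
  -- the lifted endomorphism
  have hker : ∀ a ∈ Ideal.span {(X : k[X]) ^ (m + 2)},
      aeval (Ideal.Quotient.mk (Ideal.span {(X : k[X]) ^ (m + 2)}) p₀) a =
        (0 : k[X] ⧸ Ideal.span {(X : k[X]) ^ (m + 2)}) := by
    intro a ha
    rw [Ideal.mem_span_singleton] at ha
    obtain ⟨c, rfl⟩ := ha
    rw [map_mul, map_pow, aeval_X, ← map_pow]
    have h3 : Ideal.Quotient.mk (Ideal.span {(X : k[X]) ^ (m + 2)}) (p₀ ^ (m + 2)) = 0 := by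
      rw [Ideal.Quotient.eq_zero_iff_mem, Ideal.mem_span_singleton]
      exact pow_dvd_pow_of_dvd hXp _
    rw [h3, zero_mul]
  set Ψ : (k[X] ⧸ Ideal.span {(X : k[X]) ^ (m + 2)}) →ₐ[k]
      (k[X] ⧸ Ideal.span {(X : k[X]) ^ (m + 2)}) :=
    Ideal.Quotient.liftₐ _ (aeval (Ideal.Quotient.mk _ p₀)) hker with hΨdef
  have hΨ : ∀ g : k[X], Ψ (Ideal.Quotient.mk _ g) =
      Ideal.Quotient.mk (Ideal.span {(X : k[X]) ^ (m + 2)}) (g.comp p₀) := by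
    intro g
    rw [hΨdef]
    exact (mk_comp' _ _ _).symm
  -- key commutation on representatives
  have hA : ∀ g : k[X], Ideal.Quotient.mk (Ideal.span {(X : k[X]) ^ (m + 1)}) (g.comp p₀) =
      φ (Ideal.Quotient.mk _ g) := by
    intro g
    rw [mk_comp', hp₀, aeval_algHom_apply, ← mk_comp', Polynomial.comp_X]
  -- the class of X is in the range of Ψ
  have hxmem : Ideal.Quotient.mk (Ideal.span {(X : k[X]) ^ (m + 2)}) X ∈ Ψ.range := by
    obtain ⟨a, ha⟩ := φ.surjective (Ideal.Quotient.mk _ X)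
    obtain ⟨q, rfl⟩ := Ideal.Quotient.mk_surjective a
    have hr : Ideal.Quotient.mk (Ideal.span {(X : k[X]) ^ (m + 1)}) (q.comp p₀) =
        Ideal.Quotient.mk _ X := (hA q).trans ha
    have hrX : (X : k[X]) ^ (m + 1) ∣ q.comp p₀ - X := by
      rw [← Ideal.mem_span_singleton, ← Ideal.Quotient.eq_zero_iff_mem, map_sub, hr, sub_self]
    obtain ⟨c, hc⟩ := hrX
    obtain ⟨a', ha'⟩ := φ.surjective (Ideal.Quotient.mk _ c)
    obtain ⟨q', rfl⟩ := Ideal.Quotient.mk_surjective a'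
    have hu : Ideal.Quotient.mk (Ideal.span {(X : k[X]) ^ (m + 1)}) (q'.comp p₀) =
        Ideal.Quotient.mk _ c := (hA q').trans ha'
    have huc : (X : k[X]) ^ (m + 1) ∣ q'.comp p₀ - c := by
      rw [← Ideal.mem_span_singleton, ← Ideal.Quotient.eq_zero_iff_mem, map_sub, hu, sub_self]
    obtain ⟨d, hd⟩ := huc
    set r := q.comp p₀ with hrdef
    set u := q'.comp p₀ with hudef
    have hr' : r = X + X ^ (m + 1) * c := by rw [← hc]; ring
    have hu' : u = c + X ^ (m + 1) * d := by rw [← hd]; ring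
    have hXr : X ∣ r := by rw [hr']; exact dvd_add (dvd_refl X) ⟨X ^ m * c, by ring⟩
    -- r^(m+1) ≡ X^(m+1) mod X^(m+2)
    have hpow : (X : k[X]) ^ (m + 2) ∣ r ^ (m + 1) - X ^ (m + 1) := by
      rw [← geom_sum₂_mul]
      have h1 : (X : k[X]) ^ m ∣ ∑ i ∈ Finset.range (m + 1), r ^ i * X ^ (m + 1 - 1 - i) := by
        refine Finset.dvd_sum fun i hi => ?_
        have him : i ≤ m := by simpa [Nat.lt_succ_iff] using hi
        have hXm : (X : k[X]) ^ m = X ^ i * X ^ (m + 1 - 1 - i) := by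
          rw [← pow_add]; congr 1; omega
        rw [hXm]
        exact mul_dvd_mul (pow_dvd_pow_of_dvd hXr i) dvd_rfl
      have h2 : (X : k[X]) ^ (m + 1) ∣ r - X := ⟨c, hc⟩
      calc (X : k[X]) ^ (m + 2) ∣ X ^ m * X ^ (m + 1) := by
            rw [← pow_add]; exact pow_dvd_pow X (by omega)
        _ ∣ _ := mul_dvd_mul h1 h2
    obtain ⟨e, he⟩ := hpow
    have hre : r ^ (m + 1) = X ^ (m + 1) + X ^ (m + 2) * e := by rw [← he]; ring
    refine ⟨Ideal.Quotient.mk _ q - (Ideal.Quotient.mk _ q) ^ (m + 1) *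
      Ideal.Quotient.mk _ q', ?_⟩
    simp only [AlgHom.toRingHom_eq_coe, RingHom.coe_coe]
    rw [map_sub, map_mul, map_pow, hΨ q, hΨ q', ← hrdef, ← hudef, ← map_pow, ← map_mul,
      ← map_sub]
    rw [Ideal.Quotient.mk_eq_mk_iff_sub_mem, Ideal.mem_span_singleton]
    refine ⟨-(X ^ m * d + e * c + X ^ (m + 1) * (e * d)), ?_⟩
    rw [hre, hu', hr']
    ring
  -- Ψ is surjective
  have hsurj : Function.Surjective Ψ := by
    intro b
    obtain ⟨g, rfl⟩ := Ideal.Quotient.mk_surjective b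
    have h1 : aeval (Ideal.Quotient.mk (Ideal.span {(X : k[X]) ^ (m + 2)}) X) g ∈
        Algebra.adjoin k {Ideal.Quotient.mk (Ideal.span {(X : k[X]) ^ (m + 2)}) X} :=
      Polynomial.aeval_mem_adjoin_singleton k _
    rw [← mk_comp', Polynomial.comp_X] at h1
    exact (Algebra.adjoin_le (Set.singleton_subset_iff.mpr hxmem)) h1
  -- Ψ is bijective
  have hfd : FiniteDimensional k (k[X] ⧸ Ideal.span {(X : k[X]) ^ (m + 2)}) :=
    PowerBasis.finite (AdjoinRoot.powerBasis (pow_ne_zero (m + 2) X_ne_zero))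
  have hinj : Function.Injective Ψ := by
    have h := LinearMap.injective_iff_surjective (f := Ψ.toLinearMap)
    exact h.mpr hsurj
  refine ⟨AlgEquiv.ofBijective Ψ ⟨hinj, hsurj⟩, fun g => ?_⟩
  show Ideal.Quotient.factor hle (Ψ (Ideal.Quotient.mk _ g)) = _
  rw [hΨ g, Ideal.Quotient.factor_mk]
  exact hA g

theorem stmt_11 {k : Type*} [Field k] (m : ℕ)
    (φ : (k[X] ⧸ Ideal.span {(X : k[X]) ^ (m + 1)}) ≃ₐ[k]
         (k[X] ⧸ Ideal.span {(X : k[X]) ^ (m + 1)})) :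
    ∃ ψ : (k[X] ⧸ Ideal.span {(X : k[X]) ^ (m + 2)}) ≃ₐ[k]
          (k[X] ⧸ Ideal.span {(X : k[X]) ^ (m + 2)}),
      ∀ f : k[X] ⧸ Ideal.span {(X : k[X]) ^ (m + 2)},
        Ideal.Quotient.factor
            (Ideal.span_singleton_le_span_singleton.mpr
              (pow_dvd_pow (X : k[X]) (by omega))) (ψ f) =
          φ (Ideal.Quotient.factor
            (Ideal.span_singleton_le_span_singleton.mpr
              (pow_dvd_pow (X : k[X]) (by omega))) f) := by
  rcases Nat.eq_zero_or_pos m with hm | hm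
  · -- m = 0 : every k-algebra endomorphism of k[X]/(X) is the identity
    subst hm
    refine ⟨AlgEquiv.refl, fun f => ?_⟩
    obtain ⟨g, rfl⟩ := Ideal.Quotient.mk_surjective f
    simp only [AlgEquiv.coe_refl, id_eq]
    rw [Ideal.Quotient.factor_mk]
    have hg : Ideal.Quotient.mk (Ideal.span {(X : k[X]) ^ (0 + 1)}) g =
        algebraMap k _ (g.coeff 0) := by
      have h0 : Ideal.Quotient.mk (Ideal.span {(X : k[X]) ^ (0 + 1)}) (g - C (g.coeff 0)) = 0 := by
        rw [Ideal.Quotient.eq_zero_iff_mem, Ideal.mem_span_singleton, pow_one,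
          Polynomial.X_dvd_iff]
        simp
      have h1 := sub_eq_zero.mp (by rwa [map_sub] at h0)
      rw [h1]; rfl
    rw [hg, AlgEquiv.commutes]
  · obtain ⟨ψ, hψ⟩ := lift_aux m hm φ
      (Ideal.span_singleton_le_span_singleton.mpr (pow_dvd_pow (X : k[X]) (by omega)))
    refine ⟨ψ, fun f => ?_⟩
    obtain ⟨g, rfl⟩ := Ideal.Quotient.mk_surjective f
    rw [Ideal.Quotient.factor_mk]
    exact hψ g
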